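/- There is no two-dimensional unitary representation ρ of SL₂(ℤ) that is a direct sum of two one-dimensional representations and satisfies the admissibility condition that both off-diagonal-row entries ρ(S)_{01} and ρ(S)_{10} are strictly positive reals in some basis where ρ(T) is diagonal. More precisely: if ρ ≅ ζ^a ⊕ ζ^b with a,b ∈ {0,…,11}, then in any basis in which ρ is unitary and ρ(T) is diagonal, the matrix ρ(S) is diagonal (hence ρ(S)_{01} = 0). -/

import Mathlib

open Matrix Complex MatrixGroups

/-- The generator `S` of `SL(2, ℤ)`. -/
def SmatZ : SL(2, ℤ) :=
  ⟨!![0, -1; 1, 0], by norm_num [Matrix.det_fin_two_of]⟩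

/-- The generator `T` of `SL(2, ℤ)`. -/
def TmatZ : SL(2, ℤ) :=
  ⟨!![1, 1; 0, 1], by norm_num [Matrix.det_fin_two_of]⟩

lemma ST_rel : (SmatZ * TmatZ)^3 = SmatZ^2 := by
  ext i j
  fin_cases i <;> fin_cases j <;>
    simp [SmatZ, TmatZ, pow_succ, Matrix.SpecialLinearGroup.coe_mul, Matrix.mul_apply, Fin.sum_univ_succ] <;> rfl

theorem stmt_8 (ρ : SL(2, ℤ) →* Matrix (Fin 2) (Fin 2) ℂ)
    (χ₁ χ₂ : SL(2, ℤ) →* ℂˣ)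
    (P : Matrix (Fin 2) (Fin 2) ℂ) (hP : IsUnit P)
    (hconj : ∀ γ : SL(2, ℤ),
      ρ γ = P * Matrix.diagonal ![(χ₁ γ : ℂ), (χ₂ γ : ℂ)] * P⁻¹)
    (hunitary : ∀ γ : SL(2, ℤ), ρ γ * (ρ γ)ᴴ = 1)
    (hTdiag : (ρ TmatZ).IsDiag) :
    (ρ SmatZ).IsDiag ∧ ρ SmatZ 0 1 = 0 := by
  have hPdet : IsUnit P.det := (Matrix.isUnit_iff_isUnit_det P).mp hP
  have hPinv : P⁻¹ * P = 1 := Matrix.nonsing_inv_mul P hPdet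
  have hPinv' : P * P⁻¹ = 1 := Matrix.mul_nonsing_inv P hPdet
  -- the images of ρ commute with one another
  have hcomm : ρ SmatZ * ρ TmatZ = ρ TmatZ * ρ SmatZ := by
    rw [hconj SmatZ, hconj TmatZ]
    have h : ∀ A B : Matrix (Fin 2) (Fin 2) ℂ,
        (P * A * P⁻¹) * (P * B * P⁻¹) = P * (A * B) * P⁻¹ := by
      intro A B
      simp only [← Matrix.mul_assoc]
      rw [Matrix.mul_assoc (P * A) P⁻¹ P, hPinv, Matrix.mul_one]
    rw [h, h, Matrix.diagonal_mul_diagonal, Matrix.diagonal_mul_diagonal]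
    congr 1
    ext i
    fin_cases i <;> simp [mul_comm]
  suffices hdiag : (ρ SmatZ).IsDiag by
    exact ⟨hdiag, hdiag (by decide : (0 : Fin 2) ≠ 1)⟩
  by_cases heq : ρ TmatZ 0 0 = ρ TmatZ 1 1
  · -- ρ T is scalar, so χ₁ T = χ₂ T, so χ₁ S = χ₂ S, so ρ S is scalar
    set t := ρ TmatZ 0 0 with ht
    have hT : ρ TmatZ = t • (1 : Matrix (Fin 2) (Fin 2) ℂ) := by
      ext i j
      fin_cases i <;> fin_cases j <;>
        simp [← heq, ← ht, hTdiag (by decide : (0:Fin 2) ≠ 1),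
          hTdiag (by decide : (1:Fin 2) ≠ 0), Matrix.one_apply]
    have hDeq : Matrix.diagonal ![(χ₁ TmatZ : ℂ), (χ₂ TmatZ : ℂ)]
        = P⁻¹ * ρ TmatZ * P := by
      rw [hconj TmatZ]
      simp only [← Matrix.mul_assoc]
      rw [hPinv, Matrix.one_mul,
        Matrix.mul_assoc _ P⁻¹ P, hPinv, Matrix.mul_one]
    have hD : Matrix.diagonal ![(χ₁ TmatZ : ℂ), (χ₂ TmatZ : ℂ)]
        = t • (1 : Matrix (Fin 2) (Fin 2) ℂ) := by
      rw [hDeq, hT, Matrix.mul_smul, Matrix.mul_one, Matrix.smul_mul, hPinv]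
    have h0 := congrFun (congrFun hD 0) 0
    have h1 := congrFun (congrFun hD 1) 1
    simp [Matrix.one_apply] at h0 h1
    have hχTu : χ₁ TmatZ = χ₂ TmatZ := Units.ext (by rw [h0, h1])
    -- relation forced by (ST)³ = S²: χ(S) = χ(T)⁻³
    have hrel : ∀ χ : SL(2, ℤ) →* ℂˣ, χ SmatZ = (χ TmatZ ^ 3)⁻¹ := by
      intro χ
      have h := congrArg χ ST_rel
      simp only [map_pow, _root_.map_mul, mul_pow] at h
      have h3 : χ SmatZ * χ TmatZ ^ 3 = 1 := by
        calc χ SmatZ * χ TmatZ ^ 3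
            = (χ SmatZ ^ 2)⁻¹ * (χ SmatZ ^ 3 * χ TmatZ ^ 3) := by group
          _ = (χ SmatZ ^ 2)⁻¹ * χ SmatZ ^ 2 := by rw [h]
          _ = 1 := by group
      exact eq_inv_of_mul_eq_one_left h3
    have hχS : χ₁ SmatZ = χ₂ SmatZ := by rw [hrel χ₁, hrel χ₂, hχTu]
    have hS : ρ SmatZ = ((χ₁ SmatZ : ℂ)) • (1 : Matrix (Fin 2) (Fin 2) ℂ) := by
      rw [hconj SmatZ]
      have hd : Matrix.diagonal ![(χ₁ SmatZ : ℂ), (χ₂ SmatZ : ℂ)]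
          = ((χ₁ SmatZ : ℂ)) • (1 : Matrix (Fin 2) (Fin 2) ℂ) := by
        ext i j
        fin_cases i <;> fin_cases j <;> simp [Matrix.one_apply, hχS]
      rw [hd, Matrix.mul_smul, Matrix.mul_one, Matrix.smul_mul, hPinv']
    rw [hS]
    intro i j hij
    simp [Matrix.one_apply, hij]
  · -- distinct eigenvalues: commuting with a diagonal matrix forces diagonal
    intro i j hij
    have hTd01 : ρ TmatZ 0 1 = 0 := hTdiag (by decide)
    have hTd10 : ρ TmatZ 1 0 = 0 := hTdiag (by decide)
    have h01 := congrFun (congrFun hcomm 0) 1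
    have h10 := congrFun (congrFun hcomm 1) 0
    rw [Matrix.mul_apply, Matrix.mul_apply, Fin.sum_univ_two, Fin.sum_univ_two]
      at h01 h10
    rw [hTd01] at h01
    rw [hTd10] at h10
    have e01 : ρ SmatZ 0 1 = 0 := by
      rcases mul_eq_zero.mp
          (show ρ SmatZ 0 1 * (ρ TmatZ 1 1 - ρ TmatZ 0 0) = 0 by
            linear_combination h01) with h' | h'
      · exact h'
      · exact absurd (sub_eq_zero.mp h').symm heq
    have e10 : ρ SmatZ 1 0 = 0 := by
      rcases mul_eq_zero.mp
          (show ρ SmatZ 1 0 * (ρ TmatZ 0 0 - ρ TmatZ 1 1) = 0 by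
            linear_combination h10) with h' | h'
      · exact h'
      · exact absurd (sub_eq_zero.mp h') heq
    fin_cases i <;> fin_cases j
    · exact absurd rfl hij
    · exact e01
    · exact e10
    · exact absurd rfl hij
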